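/- For every positive integer κ, all quaternions x₁, x₂ ∈ ℍ, every homogeneous polynomial P(X,Y) of degree κ with complex coefficients, and all (X₀,Y₀) ∈ ℂ², one has ∫_ℍ exp(2πi·tr(ȳx₂))·exp(−2π(N(x₁)+N(y)))·P((X₀,Y₀)·(A(x̄₁) − √−1·A(ȳ))) dy = exp(−2π(N(x₁)+N(x₂)))·P((X₀,Y₀)·A(x̄₁+x̄₂)). (This expresses that the Archimedean test function φ_{0,∞}(X) = e(√−1·ᵗX̄X)·σ_κ((1,−√−1)X̄) has partial Fourier transform I_∞φ_{0,∞}(x₁,x₂) = e(√−1·(N(x₁)+N(x₂)))·σ_κ(x̄₁+x̄₂).) -/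

import Mathlib

open MeasureTheory
open scoped ENNReal

noncomputable section

/-- The ℝ-algebra embedding `A : ℍ → M₂(ℂ)`. -/
def Amap (q : Quaternion ℝ) : Matrix (Fin 2) (Fin 2) ℂ :=
  !![(q.re : ℂ) + (q.imI : ℂ) * Complex.I, (q.imJ : ℂ) + (q.imK : ℂ) * Complex.I;
     -(q.imJ : ℂ) + (q.imK : ℂ) * Complex.I, (q.re : ℂ) - (q.imI : ℂ) * Complex.I]

/-- The coordinate identification `ℝ⁴ ≅ ℍ`. -/
def quatOf (a : Fin 4 → ℝ) : Quaternion ℝ := ⟨a 0, a 1, a 2, a 3⟩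

/-- Reduced trace `tr(x) = x + x̄ = 2·Re(x)`. -/
def qtr (x : Quaternion ℝ) : ℝ := 2 * x.re

/-- Reduced norm `N(x) = x·x̄`. -/
def qN (x : Quaternion ℝ) : ℝ := x.re ^ 2 + x.imI ^ 2 + x.imJ ^ 2 + x.imK ^ 2

section Stmt2AuxSection
open Filter Complex Real


namespace Stmt2Aux

lemma norm_cexp_aux (γ : ℂ) (t : ℝ) :
    ‖Complex.exp (γ * t - 2 * (π : ℂ) * (t : ℂ) ^ 2)‖
      = Real.exp (γ.re * t - 2 * π * t ^ 2) := by
  rw [Complex.norm_exp]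
  congr 1
  rw [show γ * ↑t - 2 * (π:ℂ) * (t:ℂ) ^ 2 = γ * ↑t - ((2 * π * t ^ 2 : ℝ) : ℂ) by
    push_cast; ring]
  simp only [Complex.sub_re, Complex.mul_re, Complex.ofReal_re, Complex.ofReal_im]
  ring

lemma exp_quad_bound (r : ℝ) (t : ℝ) :
    Real.exp (r * t - 2 * π * t ^ 2)
      ≤ Real.exp (r ^ 2 / (4 * π)) * Real.exp (-π * t ^ 2) := by
  rw [← Real.exp_add]
  apply Real.exp_le_exp.2
  have hπ := Real.pi_pos
  have key : r ^ 2 / (4 * π) + -π * t ^ 2 - (r * t - 2 * π * t ^ 2)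
      = (r - 2 * π * t) ^ 2 / (4 * π) := by field_simp; ring
  have h2 : (0:ℝ) ≤ (r - 2 * π * t) ^ 2 / (4 * π) := by positivity
  linarith

lemma integrable_abs_pow_gauss (k : ℕ) :
    Integrable (fun t : ℝ => |t ^ k * Real.exp (-π * t ^ 2)|) := by
  have := (integrable_rpow_mul_exp_neg_mul_sq Real.pi_pos
      (show (-1:ℝ) < (k:ℝ) from lt_of_lt_of_le (by norm_num) (Nat.cast_nonneg k))).abs
  refine this.congr (Eventually.of_forall fun t => ?_)
  simp [Real.rpow_natCast]

/-- one-variable basic integrand -/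
lemma integrable_pow_cexp (k : ℕ) (γ : ℂ) :
    Integrable fun t : ℝ => (t : ℂ) ^ k * Complex.exp (γ * t - 2 * (π : ℂ) * (t : ℂ) ^ 2) := by
  have hmeas : AEStronglyMeasurable
      (fun t : ℝ => (t : ℂ) ^ k * Complex.exp (γ * t - 2 * (π : ℂ) * (t : ℂ) ^ 2)) volume := by
    apply Continuous.aestronglyMeasurable; fun_prop
  refine Integrable.mono' ((integrable_abs_pow_gauss k).const_mul
    (Real.exp (γ.re ^ 2 / (4 * π)))) hmeas (Eventually.of_forall fun t => ?_)
  rw [norm_mul, norm_pow, Complex.norm_real, norm_cexp_aux, Real.norm_eq_abs,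
    _root_.abs_mul, _root_.abs_pow, _root_.abs_of_nonneg (Real.exp_pos _).le]
  calc |t| ^ k * Real.exp (γ.re * t - 2 * π * t ^ 2)
      ≤ |t| ^ k * (Real.exp (γ.re ^ 2 / (4 * π)) * Real.exp (-π * t ^ 2)) := by
        exact mul_le_mul_of_nonneg_left (exp_quad_bound _ _) (by positivity)
    _ = Real.exp (γ.re ^ 2 / (4 * π)) * (|t| ^ k * Real.exp (-π * t ^ 2)) := by ring

lemma tendsto_pow_cexp_atTop (k : ℕ) (γ : ℂ) :
    Tendsto (fun t : ℝ => (t : ℂ) ^ k * Complex.exp (γ * t - 2 * (π : ℂ) * (t : ℂ) ^ 2))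
      atTop (nhds 0) := by
  rw [tendsto_zero_iff_norm_tendsto_zero]
  have hb : ∀ t : ℝ, 0 ≤ t →
      ‖(t : ℂ) ^ k * Complex.exp (γ * t - 2 * (π : ℂ) * (t : ℂ) ^ 2)‖
        ≤ Real.exp ((γ.re + 1) ^ 2 / (8 * π)) * (t ^ k * Real.exp (-t)) := by
    intro t ht
    rw [norm_mul, norm_pow, Complex.norm_real, norm_cexp_aux, Real.norm_eq_abs,
      _root_.abs_of_nonneg ht]
    have hπ := Real.pi_pos
    have key : -t + (γ.re + 1) ^ 2 / (8 * π) - (γ.re * t - 2 * π * t ^ 2)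
        = ((γ.re + 1) - 4 * π * t) ^ 2 / (8 * π) := by
      field_simp; ring
    have h1 : γ.re * t - 2 * π * t ^ 2 ≤ -t + (γ.re + 1) ^ 2 / (8 * π) := by
      have h2 : (0:ℝ) ≤ ((γ.re + 1) - 4 * π * t) ^ 2 / (8 * π) := by positivity
      linarith
    calc t ^ k * Real.exp (γ.re * t - 2 * π * t ^ 2)
        ≤ t ^ k * Real.exp (-t + (γ.re + 1) ^ 2 / (8 * π)) := by
          exact mul_le_mul_of_nonneg_left (Real.exp_le_exp.2 h1) (by positivity)
      _ = Real.exp ((γ.re + 1) ^ 2 / (8 * π)) * (t ^ k * Real.exp (-t)) := by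
          rw [Real.exp_add]; ring
  have h2 : Tendsto (fun t : ℝ => Real.exp ((γ.re + 1) ^ 2 / (8 * π)) * (t ^ k * Real.exp (-t)))
      atTop (nhds 0) := by
    simpa using (tendsto_pow_mul_exp_neg_atTop_nhds_zero k).const_mul
      (Real.exp ((γ.re + 1) ^ 2 / (8 * π)))
  refine squeeze_zero' ?_ ?_ h2
  · exact Eventually.of_forall fun t => norm_nonneg _
  · filter_upwards [eventually_ge_atTop (0:ℝ)] with t ht using hb t ht

lemma tendsto_pow_cexp_atBot (k : ℕ) (γ : ℂ) :
    Tendsto (fun t : ℝ => (t : ℂ) ^ k * Complex.exp (γ * t - 2 * (π : ℂ) * (t : ℂ) ^ 2))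
      atBot (nhds 0) := by
  have h := ((tendsto_pow_cexp_atTop k (-γ)).const_mul ((-1 : ℂ) ^ k)).comp
    tendsto_neg_atBot_atTop
  rw [mul_zero] at h
  refine h.congr fun t => ?_
  show (-1:ℂ) ^ k * ((((-t : ℝ)) : ℂ) ^ k
      * Complex.exp (-γ * ((-t : ℝ) : ℂ) - 2 * (π : ℂ) * (((-t : ℝ)) : ℂ) ^ 2)) = _
  push_cast
  rw [← mul_assoc, ← mul_pow]
  rw [show (-1:ℂ) * -(t:ℂ) = (t:ℂ) by ring,
    show -γ * -(t:ℂ) - 2 * (π:ℂ) * (-(t:ℂ)) ^ 2 = γ * (t:ℂ) - 2 * (π:ℂ) * (t:ℂ) ^ 2 by ring]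

lemma integrable_poly_cexp (p : Polynomial ℂ) (γ : ℂ) :
    Integrable fun t : ℝ => p.eval (t : ℂ) * Complex.exp (γ * t - 2 * (π : ℂ) * (t : ℂ) ^ 2) := by
  induction p using Polynomial.induction_on' with
  | add p q hp hq => simpa [add_mul, Pi.add_def] using hp.add hq
  | monomial n a =>
      simpa [Polynomial.eval_monomial, mul_assoc] using (integrable_pow_cexp n γ).const_mul a

lemma tendsto_poly_cexp_atTop (p : Polynomial ℂ) (γ : ℂ) :
    Tendsto (fun t : ℝ => p.eval (t : ℂ) * Complex.exp (γ * t - 2 * (π : ℂ) * (t : ℂ) ^ 2))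
      atTop (nhds 0) := by
  induction p using Polynomial.induction_on' with
  | add p q hp hq => simpa [add_mul] using hp.add hq
  | monomial n a =>
      simpa [Polynomial.eval_monomial, mul_assoc] using (tendsto_pow_cexp_atTop n γ).const_mul a

lemma tendsto_poly_cexp_atBot (p : Polynomial ℂ) (γ : ℂ) :
    Tendsto (fun t : ℝ => p.eval (t : ℂ) * Complex.exp (γ * t - 2 * (π : ℂ) * (t : ℂ) ^ 2))
      atBot (nhds 0) := by
  induction p using Polynomial.induction_on' with
  | add p q hp hq => simpa [add_mul] using hp.add hq
  | monomial n a =>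
      simpa [Polynomial.eval_monomial, mul_assoc] using (tendsto_pow_cexp_atBot n γ).const_mul a

lemma hasDerivAt_poly_cexp (p : Polynomial ℂ) (γ : ℂ) (t : ℝ) :
    HasDerivAt (fun s : ℝ => p.eval (s : ℂ) * Complex.exp (γ * s - 2 * (π : ℂ) * (s : ℂ) ^ 2))
      ((p.derivative.eval (t : ℂ) + (γ - 4 * (π : ℂ) * t) * p.eval (t : ℂ))
        * Complex.exp (γ * t - 2 * (π : ℂ) * (t : ℂ) ^ 2)) t := by
  have h1 : HasDerivAt (fun s : ℝ => p.eval (s : ℂ)) (p.derivative.eval (t : ℂ)) t :=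
    (p.hasDerivAt (t : ℂ)).comp_ofReal
  have h2 : HasDerivAt (fun s : ℝ => γ * (s : ℂ) - 2 * (π : ℂ) * (s : ℂ) ^ 2)
      (γ - 4 * (π : ℂ) * t) t := by
    have ha : HasDerivAt (fun z : ℂ => γ * z - 2 * (π : ℂ) * z ^ 2)
        (γ - 4 * (π : ℂ) * t) (t : ℂ) := by
      have := ((hasDerivAt_id ((t:ℝ) : ℂ)).const_mul γ).sub
        (((hasDerivAt_pow 2 ((t:ℝ):ℂ)).const_mul (2 * (π : ℂ))))
      refine this.congr_deriv ?_
      norm_num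
      ring
    exact ha.comp_ofReal
  have := h1.mul h2.cexp
  refine this.congr_deriv ?_
  ring

/-- IBP: the integral of the derivative vanishes. -/
lemma integral_deriv_poly_cexp (p : Polynomial ℂ) (γ : ℂ) :
    ∫ t : ℝ, (p.derivative.eval (t : ℂ) + (γ - 4 * (π : ℂ) * t) * p.eval (t : ℂ))
        * Complex.exp (γ * t - 2 * (π : ℂ) * (t : ℂ) ^ 2) = 0 := by
  set f' := fun t : ℝ => (p.derivative.eval (t : ℂ) + (γ - 4 * (π : ℂ) * t) * p.eval (t : ℂ))
      * Complex.exp (γ * t - 2 * (π : ℂ) * (t : ℂ) ^ 2) with hf'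
  have hint : Integrable f' := by
    have h := integrable_poly_cexp (p.derivative + (Polynomial.C γ
        - Polynomial.C (4 * (π : ℂ)) * Polynomial.X) * p) γ
    refine h.congr (Eventually.of_forall fun t => ?_)
    simp only [hf', Polynomial.eval_add, Polynomial.eval_mul, Polynomial.eval_sub,
      Polynomial.eval_C, Polynomial.eval_X]
  have key : ∀ R : ℝ, ∫ t in (-R)..R, f' t
      = (fun t : ℝ => p.eval (t : ℂ) * Complex.exp (γ * t - 2 * (π : ℂ) * (t : ℂ) ^ 2)) R
        - (fun t : ℝ => p.eval (t : ℂ) * Complex.exp (γ * t - 2 * (π : ℂ) * (t : ℂ) ^ 2)) (-R) := by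
    intro R
    exact intervalIntegral.integral_eq_sub_of_hasDerivAt
      (fun t _ => hasDerivAt_poly_cexp p γ t) hint.intervalIntegrable
  have h1 : Tendsto (fun R : ℝ => ∫ t in (-R)..R, f' t) atTop (nhds (∫ t : ℝ, f' t)) :=
    intervalIntegral_tendsto_integral hint tendsto_neg_atTop_atBot tendsto_id
  have h2 : Tendsto (fun R : ℝ => ∫ t in (-R)..R, f' t) atTop (nhds 0) := by
    simp only [key]
    have := (tendsto_poly_cexp_atTop p γ).sub
      ((tendsto_poly_cexp_atBot p γ).comp tendsto_neg_atTop_atBot)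
    simpa using this
  exact tendsto_nhds_unique h1 h2

/-- value of the 1-D Gaussian integral -/
lemma integral_cexp_linear (γ : ℂ) :
    ∫ t : ℝ, Complex.exp (γ * t - 2 * (π : ℂ) * (t : ℂ) ^ 2)
      = (2 : ℂ)⁻¹ ^ (1/2 : ℂ) * Complex.exp (γ ^ 2 / (8 * (π : ℂ))) := by
  have hb : (-(2 * (π : ℂ))).re < 0 := by
    simp [Real.pi_pos]
  have h := integral_cexp_quadratic hb γ 0
  simp_rw [show ∀ t : ℝ, γ * (t:ℂ) - 2 * (π : ℂ) * (t : ℂ) ^ 2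
      = -(2 * (π : ℂ)) * (t:ℂ) ^ 2 + γ * (t:ℂ) + 0 from fun t => by ring]
  rw [h]
  have hπ : (π : ℂ) ≠ 0 := by exact_mod_cast Real.pi_ne_zero
  rw [show (π:ℂ) / - -(2 * (π:ℂ)) = (2:ℂ)⁻¹ by field_simp,
    show (4:ℂ) * -(2*(π:ℂ)) = -(8*(π:ℂ)) by ring, div_neg, zero_sub, neg_neg]
/-- linear form -/
def lin (v : Fin 4 → ℂ) (y : Fin 4 → ℝ) : ℂ := ∑ ℓ, v ℓ * (y ℓ : ℂ)

/-- Gaussian factor -/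
def gauss (c : Fin 4 → ℂ) (y : Fin 4 → ℝ) : ℂ :=
  Complex.exp (lin c y - 2 * (π : ℂ) * ∑ ℓ, ((y ℓ : ℝ) : ℂ) ^ 2)

lemma gauss_prod (c : Fin 4 → ℂ) (y : Fin 4 → ℝ) :
    gauss c y = ∏ ℓ, Complex.exp (c ℓ * (y ℓ : ℂ) - 2 * (π : ℂ) * ((y ℓ : ℝ) : ℂ) ^ 2) := by
  rw [gauss, lin, ← Complex.exp_sum]
  congr 1
  rw [Finset.mul_sum, ← Finset.sum_sub_distrib]

lemma integrable_monomial_gauss (k : Fin 4 → ℕ) (c : Fin 4 → ℂ) :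
    Integrable fun y : Fin 4 → ℝ => (∏ ℓ, ((y ℓ : ℝ) : ℂ) ^ k ℓ) * gauss c y := by
  have heq : (fun y : Fin 4 → ℝ => (∏ ℓ, ((y ℓ : ℝ) : ℂ) ^ k ℓ) * gauss c y)
      = fun y => ∏ ℓ, (((y ℓ : ℝ) : ℂ) ^ k ℓ
          * Complex.exp (c ℓ * (y ℓ : ℂ) - 2 * (π : ℂ) * ((y ℓ : ℝ) : ℂ) ^ 2)) := by
    funext y
    rw [gauss_prod, ← Finset.prod_mul_distrib]
  rw [heq]
  exact Integrable.fintype_prod fun ℓ => integrable_pow_cexp (k ℓ) (c ℓ)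

lemma integrable_mvpoly_gauss (p : MvPolynomial (Fin 4) ℂ) (c : Fin 4 → ℂ) :
    Integrable fun y : Fin 4 → ℝ =>
      MvPolynomial.eval (fun ℓ => ((y ℓ : ℝ) : ℂ)) p * gauss c y := by
  have heq : (fun y : Fin 4 → ℝ => MvPolynomial.eval (fun ℓ => ((y ℓ : ℝ) : ℂ)) p * gauss c y)
      = fun y => ∑ d ∈ p.support, MvPolynomial.coeff d p
          * ((∏ ℓ, ((y ℓ : ℝ) : ℂ) ^ d ℓ) * gauss c y) := by
    funext y
    conv_lhs => rw [p.as_sum]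
    rw [map_sum, Finset.sum_mul]
    refine Finset.sum_congr rfl fun d _ => ?_
    rw [MvPolynomial.eval_monomial, Finsupp.prod_pow]
    ring
  rw [heq]
  exact integrable_finset_sum _ fun d _ => (integrable_monomial_gauss d c).const_mul _

section Params

variable (c α β : Fin 4 → ℂ) (A B : ℂ)

/-- affine form -/
def W (A : ℂ) (α : Fin 4 → ℂ) (y : Fin 4 → ℝ) : ℂ := A + lin α y

/-- main integrand family -/
def F (m n : ℕ) (y : Fin 4 → ℝ) : ℂ := W A α y ^ m * W B β y ^ n * gauss c y

/-- polynomial witness for `W` -/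
def Wp (A : ℂ) (α : Fin 4 → ℂ) : MvPolynomial (Fin 4) ℂ :=
  MvPolynomial.C A + ∑ ℓ, MvPolynomial.C (α ℓ) * MvPolynomial.X ℓ

lemma eval_Wp (y : Fin 4 → ℝ) :
    MvPolynomial.eval (fun ℓ => ((y ℓ : ℝ) : ℂ)) (Wp A α) = W A α y := by
  simp [Wp, W, lin, map_sum]

lemma integrable_F (m n : ℕ) : Integrable (F c α β A B m n) := by
  refine (integrable_mvpoly_gauss ((Wp A α) ^ m * (Wp B β) ^ n) c).congr
    (Eventually.of_forall fun y => ?_)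
  simp only [map_mul, map_pow, eval_Wp, F]

lemma integrable_X_mul_F (ℓ : Fin 4) (m n : ℕ) :
    Integrable fun y : Fin 4 → ℝ => ((y ℓ : ℝ) : ℂ) * F c α β A B m n y := by
  refine (integrable_mvpoly_gauss (MvPolynomial.X ℓ * ((Wp A α) ^ m * (Wp B β) ^ n)) c).congr
    (Eventually.of_forall fun y => ?_)
  simp only [map_mul, map_pow, eval_Wp, MvPolynomial.eval_X, F]
  ring

/-- slice integrand: the ℓ-partial derivative of `F m n` -/
def D (ℓ : Fin 4) (m n : ℕ) (y : Fin 4 → ℝ) : ℂ :=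
  ((m : ℂ) * α ℓ * W A α y ^ (m - 1) * W B β y ^ n
    + (n : ℂ) * β ℓ * W A α y ^ m * W B β y ^ (n - 1)
    + (c ℓ - 4 * (π : ℂ) * (y ℓ : ℂ)) * W A α y ^ m * W B β y ^ n) * gauss c y

lemma integrable_D (ℓ : Fin 4) (m n : ℕ) : Integrable (D c α β A B ℓ m n) := by
  have heq : D c α β A B ℓ m n = fun y =>
      ((m : ℂ) * α ℓ) * F c α β A B (m - 1) n y + ((n : ℂ) * β ℓ) * F c α β A B m (n - 1) y
        + (c ℓ * F c α β A B m n y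
            - 4 * (π : ℂ) * (((y ℓ : ℝ) : ℂ) * F c α β A B m n y)) := by
    funext y
    simp only [D, F]
    ring
  rw [heq]
  exact (((integrable_F c α β A B (m-1) n).const_mul _).add
    ((integrable_F c α β A B m (n-1)).const_mul _)).add
    (((integrable_F c α β A B m n).const_mul _).sub
      ((integrable_X_mul_F c α β A B ℓ m n).const_mul _))

lemma lin_insertNth (v : Fin 4 → ℂ) (ℓ : Fin 4) (t : ℝ) (r : Fin 3 → ℝ) :
    lin v (Fin.insertNth ℓ t r) = v ℓ * t + ∑ i, v (ℓ.succAbove i) * (r i : ℂ) := by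
  have h := Fin.sum_univ_succAbove (fun j : Fin 4 => v j * (((Fin.insertNth ℓ t r : Fin 4 → ℝ) j : ℝ) : ℂ)) ℓ
  simp only [Fin.insertNth_apply_same, Fin.insertNth_apply_succAbove] at h
  simpa [lin] using h

lemma quad_insertNth (ℓ : Fin 4) (t : ℝ) (r : Fin 3 → ℝ) :
    (∑ j, (((Fin.insertNth ℓ t r : Fin 4 → ℝ) j : ℝ) : ℂ) ^ 2) = (t:ℂ)^2 + ∑ i, ((r i : ℝ) : ℂ) ^ 2 := by
  have h := Fin.sum_univ_succAbove (fun j : Fin 4 => (((Fin.insertNth ℓ t r : Fin 4 → ℝ) j : ℝ) : ℂ) ^ 2) ℓ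
  simp only [Fin.insertNth_apply_same, Fin.insertNth_apply_succAbove] at h
  simpa using h

lemma integral_D_eq_zero (ℓ : Fin 4) (m n : ℕ) :
    ∫ y : Fin 4 → ℝ, D c α β A B ℓ m n y = 0 := by
  have hmp : MeasurePreserving
      ((MeasurableEquiv.piFinSuccAbove (fun _ : Fin 4 => ℝ) ℓ).symm) volume volume :=
    (volume_preserving_piFinSuccAbove (fun _ : Fin 4 => ℝ) ℓ).symm
  rw [← hmp.integral_comp' (D c α β A B ℓ m n)]
  have hint : Integrable
      (fun x : ℝ × (Fin 3 → ℝ) =>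
        D c α β A B ℓ m n ((MeasurableEquiv.piFinSuccAbove (fun _ : Fin 4 => ℝ) ℓ).symm x))
      (volume.prod volume) := by
    rw [← Measure.volume_eq_prod]
    exact (hmp.integrable_comp_emb (MeasurableEquiv.measurableEmbedding _)).2
      (integrable_D c α β A B ℓ m n)
  rw [Measure.volume_eq_prod, integral_prod_symm _ hint]
  have inner_zero : ∀ r : Fin 3 → ℝ,
      (∫ t : ℝ, D c α β A B ℓ m n
        ((MeasurableEquiv.piFinSuccAbove (fun _ : Fin 4 => ℝ) ℓ).symm (t, r))) = 0 := by
    intro r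
    set K₀ : ℂ := A + ∑ i, α (ℓ.succAbove i) * (r i : ℂ) with hK₀
    set K₁ : ℂ := B + ∑ i, β (ℓ.succAbove i) * (r i : ℂ) with hK₁
    set Kq : ℂ := (∑ i, c (ℓ.succAbove i) * (r i : ℂ))
        - 2 * (π : ℂ) * ∑ i, ((r i : ℝ) : ℂ) ^ 2 with hKq
    set p : Polynomial ℂ := (Polynomial.C K₀ + Polynomial.C (α ℓ) * Polynomial.X) ^ m
        * (Polynomial.C K₁ + Polynomial.C (β ℓ) * Polynomial.X) ^ n with hp
    have hpt : ∀ t : ℝ,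
        D c α β A B ℓ m n ((MeasurableEquiv.piFinSuccAbove (fun _ : Fin 4 => ℝ) ℓ).symm (t, r))
          = ((p.derivative.eval (t : ℂ) + (c ℓ - 4 * (π : ℂ) * t) * p.eval (t : ℂ))
              * Complex.exp (c ℓ * t - 2 * (π : ℂ) * (t : ℂ) ^ 2)) * Complex.exp Kq := by
      intro t
      have hsymm : (MeasurableEquiv.piFinSuccAbove (fun _ : Fin 4 => ℝ) ℓ).symm (t, r)
          = Fin.insertNth ℓ t r := rfl
      rw [hsymm]
      have hW₀ : W A α (Fin.insertNth ℓ t r) = K₀ + α ℓ * t := by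
        rw [W, lin_insertNth, hK₀]; ring
      have hW₁ : W B β (Fin.insertNth ℓ t r) = K₁ + β ℓ * t := by
        rw [W, lin_insertNth, hK₁]; ring
      have hg : gauss c (Fin.insertNth ℓ t r)
          = Complex.exp (c ℓ * t - 2 * (π : ℂ) * (t : ℂ) ^ 2) * Complex.exp Kq := by
        rw [gauss, lin_insertNth, quad_insertNth, ← Complex.exp_add, hKq]
        congr 1
        ring
      have hyl : (((Fin.insertNth ℓ t r : Fin 4 → ℝ) ℓ : ℝ) : ℂ) = (t : ℂ) := by
        rw [Fin.insertNth_apply_same]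
      rw [D, hW₀, hW₁, hg, hyl]
      have hpd : p.derivative.eval (t : ℂ)
          = (m : ℂ) * α ℓ * (K₀ + α ℓ * t) ^ (m - 1) * (K₁ + β ℓ * t) ^ n
            + (n : ℂ) * β ℓ * (K₀ + α ℓ * t) ^ m * (K₁ + β ℓ * t) ^ (n - 1) := by
        simp only [hp, Polynomial.derivative_mul, Polynomial.derivative_pow,
          Polynomial.derivative_add, Polynomial.derivative_C, Polynomial.derivative_C_mul,
          Polynomial.derivative_X, Polynomial.eval_add, Polynomial.eval_mul, Polynomial.eval_pow,
          Polynomial.eval_C, Polynomial.eval_X, Polynomial.eval_natCast, Polynomial.eval_zero,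
          mul_one, zero_add, mul_zero, zero_mul, add_zero]
        ring
      have hpe : p.eval (t : ℂ) = (K₀ + α ℓ * t) ^ m * (K₁ + β ℓ * t) ^ n := by
        simp only [hp, Polynomial.eval_mul, Polynomial.eval_pow, Polynomial.eval_add,
          Polynomial.eval_C, Polynomial.eval_mul, Polynomial.eval_X]
      rw [hpd, hpe]
      ring
    calc (∫ t : ℝ, D c α β A B ℓ m n
            ((MeasurableEquiv.piFinSuccAbove (fun _ : Fin 4 => ℝ) ℓ).symm (t, r)))
        = (∫ t : ℝ, (p.derivative.eval (t : ℂ) + (c ℓ - 4 * (π : ℂ) * t) * p.eval (t : ℂ))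
            * Complex.exp (c ℓ * t - 2 * (π : ℂ) * (t : ℂ) ^ 2)) * Complex.exp Kq := by
          rw [← integral_mul_const]
          exact integral_congr_ae (Eventually.of_forall hpt)
      _ = 0 := by rw [integral_deriv_poly_cexp p (c ℓ), zero_mul]
  calc (∫ r : Fin 3 → ℝ, ∫ t : ℝ, D c α β A B ℓ m n
          ((MeasurableEquiv.piFinSuccAbove (fun _ : Fin 4 => ℝ) ℓ).symm (t, r)))
      = ∫ r : Fin 3 → ℝ, (0 : ℂ) := by
        exact integral_congr_ae (Eventually.of_forall inner_zero)
    _ = 0 := integral_zero _ _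

lemma sum_D (v : Fin 4 → ℂ) (m n : ℕ) (y : Fin 4 → ℝ) :
    ∑ ℓ, v ℓ * D c α β A B ℓ m n y
      = (∑ ℓ, v ℓ * α ℓ) * ((m:ℂ) * (W A α y ^ (m-1) * W B β y ^ n * gauss c y))
        + ((∑ ℓ, v ℓ * β ℓ) * ((n:ℂ) * (W A α y ^ m * W B β y ^ (n-1) * gauss c y))
        + ((∑ ℓ, v ℓ * c ℓ) * F c α β A B m n y
        - lin v y * (4 * (π:ℂ) * F c α β A B m n y))) := by
  have hterm : ∀ ℓ : Fin 4, v ℓ * D c α β A B ℓ m n y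
      = (v ℓ * α ℓ) * ((m:ℂ) * (W A α y ^ (m-1) * W B β y ^ n * gauss c y))
        + ((v ℓ * β ℓ) * ((n:ℂ) * (W A α y ^ m * W B β y ^ (n-1) * gauss c y))
        + ((v ℓ * c ℓ) * F c α β A B m n y
        - (v ℓ * ((y ℓ : ℝ) : ℂ)) * (4 * (π:ℂ) * F c α β A B m n y))) := fun ℓ => by
    simp only [D, F]; ring
  rw [Finset.sum_congr rfl fun ℓ _ => hterm ℓ, Finset.sum_add_distrib,
    Finset.sum_add_distrib, Finset.sum_sub_distrib]
  simp only [← Finset.sum_mul, lin]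

lemma rec_alpha (hα : ∑ ℓ, α ℓ * α ℓ = 0) (hαβ : ∑ ℓ, α ℓ * β ℓ = 0) (m n : ℕ) :
    ∫ y : Fin 4 → ℝ, F c α β A B (m+1) n y
      = (A + (∑ ℓ, α ℓ * c ℓ) / (4 * (π:ℂ))) * ∫ y : Fin 4 → ℝ, F c α β A B m n y := by
  have h0 : (∫ y : Fin 4 → ℝ, ∑ ℓ, α ℓ * D c α β A B ℓ m n y) = 0 := by
    rw [integral_finset_sum _ fun ℓ _ => (integrable_D c α β A B ℓ m n).const_mul (α ℓ)]
    simp [integral_const_mul, integral_D_eq_zero]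
  have hpt : ∀ y : Fin 4 → ℝ, ∑ ℓ, α ℓ * D c α β A B ℓ m n y
      = ((∑ ℓ, α ℓ * c ℓ) + 4*(π:ℂ)*A) * F c α β A B m n y
          - (4*(π:ℂ)) * F c α β A B (m+1) n y := by
    intro y
    rw [sum_D, hα, hαβ]
    have hlin : lin α y * (4 * (π:ℂ) * F c α β A B m n y)
        = 4*(π:ℂ) * F c α β A B (m+1) n y - 4*(π:ℂ)*(A * F c α β A B m n y) := by
      simp only [F, W, pow_succ]; ring
    rw [hlin]
    ring
  rw [integral_congr_ae (Eventually.of_forall hpt),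
    integral_sub ((integrable_F c α β A B m n).const_mul _)
      ((integrable_F c α β A B (m+1) n).const_mul _),
    integral_const_mul, integral_const_mul] at h0
  have hπ : (4*(π:ℂ)) ≠ 0 := by
    simp [Complex.ofReal_ne_zero, Real.pi_ne_zero]
  have h3 : ∫ y : Fin 4 → ℝ, F c α β A B (m+1) n y
      = (((∑ ℓ, α ℓ * c ℓ) + 4*(π:ℂ)*A)/(4*(π:ℂ))) * ∫ y : Fin 4 → ℝ, F c α β A B m n y := by
    rw [div_mul_eq_mul_div, eq_div_iff hπ]
    linear_combination -h0
  rw [h3]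
  congr 1
  field_simp
  ring

lemma rec_beta (hβ : ∑ ℓ, β ℓ * β ℓ = 0) (hαβ : ∑ ℓ, α ℓ * β ℓ = 0) (m n : ℕ) :
    ∫ y : Fin 4 → ℝ, F c α β A B m (n+1) y
      = (B + (∑ ℓ, β ℓ * c ℓ) / (4 * (π:ℂ))) * ∫ y : Fin 4 → ℝ, F c α β A B m n y := by
  have hβα : ∑ ℓ, β ℓ * α ℓ = 0 := by
    rw [← hαβ]; exact Finset.sum_congr rfl fun ℓ _ => mul_comm _ _
  have h0 : (∫ y : Fin 4 → ℝ, ∑ ℓ, β ℓ * D c α β A B ℓ m n y) = 0 := by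
    rw [integral_finset_sum _ fun ℓ _ => (integrable_D c α β A B ℓ m n).const_mul (β ℓ)]
    simp [integral_const_mul, integral_D_eq_zero]
  have hpt : ∀ y : Fin 4 → ℝ, ∑ ℓ, β ℓ * D c α β A B ℓ m n y
      = ((∑ ℓ, β ℓ * c ℓ) + 4*(π:ℂ)*B) * F c α β A B m n y
          - (4*(π:ℂ)) * F c α β A B m (n+1) y := by
    intro y
    rw [sum_D, hβ, hβα]
    have hlin : lin β y * (4 * (π:ℂ) * F c α β A B m n y)
        = 4*(π:ℂ) * F c α β A B m (n+1) y - 4*(π:ℂ)*(B * F c α β A B m n y) := by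
      simp only [F, W, pow_succ]; ring
    rw [hlin]
    ring
  rw [integral_congr_ae (Eventually.of_forall hpt),
    integral_sub ((integrable_F c α β A B m n).const_mul _)
      ((integrable_F c α β A B m (n+1)).const_mul _),
    integral_const_mul, integral_const_mul] at h0
  have hπ : (4*(π:ℂ)) ≠ 0 := by
    simp [Complex.ofReal_ne_zero, Real.pi_ne_zero]
  have h3 : ∫ y : Fin 4 → ℝ, F c α β A B m (n+1) y
      = (((∑ ℓ, β ℓ * c ℓ) + 4*(π:ℂ)*B)/(4*(π:ℂ))) * ∫ y : Fin 4 → ℝ, F c α β A B m n y := by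
    rw [div_mul_eq_mul_div, eq_div_iff hπ]
    linear_combination -h0
  rw [h3]
  congr 1
  field_simp
  ring

lemma M_val (hα : ∑ ℓ, α ℓ * α ℓ = 0) (hβ : ∑ ℓ, β ℓ * β ℓ = 0)
    (hαβ : ∑ ℓ, α ℓ * β ℓ = 0) (m n : ℕ) :
    ∫ y : Fin 4 → ℝ, F c α β A B m n y
      = (A + (∑ ℓ, α ℓ * c ℓ) / (4 * (π:ℂ))) ^ m * (B + (∑ ℓ, β ℓ * c ℓ) / (4 * (π:ℂ))) ^ n
          * ∫ y : Fin 4 → ℝ, gauss c y := by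
  induction m with
  | zero =>
    induction n with
    | zero => simp [F]
    | succ n ihn =>
        rw [rec_beta c α β A B hβ hαβ 0 n, ihn]
        ring
  | succ m ihm =>
      rw [rec_alpha c α β A B hα hαβ m n, ihm]
      ring

end Params

lemma quarter_pow : ((2:ℂ)⁻¹ ^ ((1:ℂ)/2)) ^ (4:ℕ) = 1/4 := by
  rw [show (2:ℂ)⁻¹ = (((2:ℝ)⁻¹ : ℝ) : ℂ) by push_cast; norm_num,
    show ((1:ℂ)/2) = (((1:ℝ)/2 : ℝ) : ℂ) by norm_num,
    ← Complex.ofReal_cpow (by norm_num), ← Complex.ofReal_pow]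
  have hr : (((2:ℝ)⁻¹ ^ ((1:ℝ)/2)) : ℝ) ^ (4:ℕ) = (1/4 : ℝ) := by
    rw [← Real.rpow_natCast ((2:ℝ)⁻¹ ^ ((1:ℝ)/2)) 4,
      ← Real.rpow_mul (by norm_num : (0:ℝ) ≤ 2⁻¹)]
    rw [show ((1:ℝ)/2 * (4:ℕ) : ℝ) = ((2:ℕ):ℝ) by norm_num, Real.rpow_natCast]
    norm_num
  rw [hr]
  norm_num

lemma integral_gauss (c : Fin 4 → ℂ) :
    ∫ y : Fin 4 → ℝ, gauss c y
      = (1/4 : ℂ) * Complex.exp ((∑ ℓ, c ℓ ^ 2) / (8 * (π:ℂ))) := by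
  calc ∫ y : Fin 4 → ℝ, gauss c y
      = ∫ y : Fin 4 → ℝ, ∏ ℓ,
          Complex.exp (c ℓ * (y ℓ : ℂ) - 2 * (π:ℂ) * ((y ℓ : ℝ) : ℂ) ^ 2) :=
        integral_congr_ae (Eventually.of_forall fun y => gauss_prod c y)
    _ = ∏ ℓ, ∫ t : ℝ, Complex.exp (c ℓ * t - 2 * (π:ℂ) * (t : ℂ) ^ 2) :=
        MeasureTheory.integral_fintype_prod_eq_prod
          (fun ℓ (t : ℝ) => Complex.exp (c ℓ * t - 2 * (π:ℂ) * (t : ℂ) ^ 2))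
    _ = ∏ ℓ, ((2:ℂ)⁻¹ ^ ((1:ℂ)/2) * Complex.exp (c ℓ ^ 2 / (8 * (π:ℂ)))) :=
        Finset.prod_congr rfl fun ℓ _ => integral_cexp_linear (c ℓ)
    _ = ((2:ℂ)⁻¹ ^ ((1:ℂ)/2)) ^ (4:ℕ)
          * Complex.exp ((∑ ℓ, c ℓ ^ 2) / (8 * (π:ℂ))) := by
        rw [Finset.prod_mul_distrib, Finset.prod_const, Finset.card_univ, Fintype.card_fin,
          ← Complex.exp_sum, ← Finset.sum_div]
    _ = (1/4 : ℂ) * Complex.exp ((∑ ℓ, c ℓ ^ 2) / (8 * (π:ℂ))) := by rw [quarter_pow]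

end Stmt2Aux

end Stmt2AuxSection

open Filter Complex Real Stmt2Aux

/-- for a positive integer κ, quaternions x₁, x₂, a homogeneous polynomial P of
degree κ and (X₀,Y₀) ∈ ℂ²,
`∫_ℍ exp(2πi·tr(ȳx₂))·exp(−2π(N(x₁)+N(y)))·P((X₀,Y₀)·(A(x̄₁) − √−1·A(ȳ))) dy
  = exp(−2π(N(x₁)+N(x₂)))·P((X₀,Y₀)·A(x̄₁+x̄₂))`,
the measure on ℍ ≅ ℝ⁴ being 4 times Lebesgue measure. -/
theorem stmt2 (κ : ℕ) (hκ : 0 < κ) (x₁ x₂ : Quaternion ℝ)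
    (P : MvPolynomial (Fin 2) ℂ) (hP : P.IsHomogeneous κ) (X₀ Y₀ : ℂ) :
    (∫ a : Fin 4 → ℝ,
        Complex.exp (2 * (Real.pi : ℂ) * Complex.I * ((qtr (star (quatOf a) * x₂) : ℝ) : ℂ))
          * Complex.exp (-(2 * (Real.pi : ℂ)) * (((qN x₁ + qN (quatOf a)) : ℝ) : ℂ))
          * MvPolynomial.eval
              (Matrix.vecMul ![X₀, Y₀]
                (Amap (star x₁) - Complex.I • Amap (star (quatOf a)))) P
        ∂((4 : ℝ≥0∞) • volume))
      = Complex.exp (-(2 * (Real.pi : ℂ)) * (((qN x₁ + qN x₂) : ℝ) : ℂ))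
          * MvPolynomial.eval
              (Matrix.vecMul ![X₀, Y₀] (Amap (star x₁ + star x₂))) P := by
  set cc : Fin 4 → ℂ := ![4*(π:ℂ)*Complex.I*x₂.re, 4*(π:ℂ)*Complex.I*x₂.imI,
    4*(π:ℂ)*Complex.I*x₂.imJ, 4*(π:ℂ)*Complex.I*x₂.imK] with hcc
  set αα : Fin 4 → ℂ := ![-Complex.I*X₀, -X₀, -Complex.I*Y₀, -Y₀] with hαα
  set ββ : Fin 4 → ℂ := ![-Complex.I*Y₀, Y₀, Complex.I*X₀, -X₀] with hββ
  set AA : ℂ := X₀*((x₁.re:ℂ) - (x₁.imI:ℂ)*Complex.I) + Y₀*((x₁.imJ:ℂ) - (x₁.imK:ℂ)*Complex.I)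
    with hAA
  set BB : ℂ := X₀*(-(x₁.imJ:ℂ) - (x₁.imK:ℂ)*Complex.I) + Y₀*((x₁.re:ℂ) + (x₁.imI:ℂ)*Complex.I)
    with hBB
  have hπ : ((π:ℂ)) ≠ 0 := by exact_mod_cast Real.pi_ne_zero
  have hα : ∑ ℓ, αα ℓ * αα ℓ = 0 := by
    simp only [hαα, Fin.sum_univ_four, Matrix.cons_val_zero, Matrix.cons_val_one,
      Matrix.head_cons, Matrix.cons_val_two, Matrix.tail_cons, Matrix.cons_val_three]
    linear_combination (X₀^2 + Y₀^2) * Complex.I_sq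
  have hβ : ∑ ℓ, ββ ℓ * ββ ℓ = 0 := by
    simp only [hββ, Fin.sum_univ_four, Matrix.cons_val_zero, Matrix.cons_val_one,
      Matrix.head_cons, Matrix.cons_val_two, Matrix.tail_cons, Matrix.cons_val_three]
    linear_combination (X₀^2 + Y₀^2) * Complex.I_sq
  have hαβ : ∑ ℓ, αα ℓ * ββ ℓ = 0 := by
    simp only [hαα, hββ, Fin.sum_univ_four, Matrix.cons_val_zero, Matrix.cons_val_one,
      Matrix.head_cons, Matrix.cons_val_two, Matrix.tail_cons, Matrix.cons_val_three]
    ring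
  have hvec : ∀ a : Fin 4 → ℝ,
      Matrix.vecMul ![X₀, Y₀] (Amap (star x₁) - Complex.I • Amap (star (quatOf a)))
        = ![W AA αα a, W BB ββ a] := by
    intro a
    funext j
    simp only [Amap, Quaternion.re_star, Quaternion.imI_star, Quaternion.imJ_star, Quaternion.imK_star]
    fin_cases j <;>
      simp only [Fin.zero_eta, Fin.mk_one, Matrix.vecMul, dotProduct,
        Fin.sum_univ_two, Amap, quatOf, W, lin,
        Fin.sum_univ_four, Matrix.sub_apply, Matrix.smul_apply, smul_eq_mul,
        Quaternion.re_star, Quaternion.imI_star, Quaternion.imJ_star, Quaternion.imK_star,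
        Matrix.cons_val_zero, Matrix.cons_val_one, Matrix.head_cons, Matrix.cons_val_two,
        Matrix.tail_cons, Matrix.cons_val_three, Matrix.cons_val', Matrix.of_apply,
        Matrix.empty_val', Matrix.cons_val_fin_one, Matrix.head_fin_const, hαα, hββ, hAA, hBB]
    · push_cast
      linear_combination (X₀ * ((a 1 : ℝ) : ℂ) + Y₀ * ((a 3 : ℝ) : ℂ)) * Complex.I_sq
    · push_cast
      linear_combination (X₀ * ((a 3 : ℝ) : ℂ) - Y₀ * ((a 1 : ℝ) : ℂ)) * Complex.I_sq
  have hvec2 : Matrix.vecMul ![X₀, Y₀] (Amap (star x₁ + star x₂))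
      = ![AA + (∑ ℓ, αα ℓ * cc ℓ) / (4 * (π:ℂ)), BB + (∑ ℓ, ββ ℓ * cc ℓ) / (4 * (π:ℂ))] := by
    funext j
    have hSα : (∑ ℓ, αα ℓ * cc ℓ) / (4 * (π:ℂ))
        = X₀*((x₂.re:ℂ) - (x₂.imI:ℂ)*Complex.I) + Y₀*((x₂.imJ:ℂ) - (x₂.imK:ℂ)*Complex.I) := by
      rw [div_eq_iff (by simpa using hπ : (4*(π:ℂ)) ≠ 0)]
      simp only [hαα, hcc, Fin.sum_univ_four, Matrix.cons_val_zero, Matrix.cons_val_one,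
        Matrix.head_cons, Matrix.cons_val_two, Matrix.tail_cons, Matrix.cons_val_three]
      linear_combination (-4*(π:ℂ)*(X₀*(x₂.re:ℂ) + Y₀*(x₂.imJ:ℂ))) * Complex.I_sq
    have hSβ : (∑ ℓ, ββ ℓ * cc ℓ) / (4 * (π:ℂ))
        = X₀*(-(x₂.imJ:ℂ) - (x₂.imK:ℂ)*Complex.I) + Y₀*((x₂.re:ℂ) + (x₂.imI:ℂ)*Complex.I) := by
      rw [div_eq_iff (by simpa using hπ : (4*(π:ℂ)) ≠ 0)]
      simp only [hββ, hcc, Fin.sum_univ_four, Matrix.cons_val_zero, Matrix.cons_val_one,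
        Matrix.head_cons, Matrix.cons_val_two, Matrix.tail_cons, Matrix.cons_val_three]
      linear_combination (-4*(π:ℂ)*(Y₀*(x₂.re:ℂ) - X₀*(x₂.imJ:ℂ))) * Complex.I_sq
    fin_cases j
    · simp only [Fin.zero_eta, Matrix.cons_val_zero, Matrix.vecMul, dotProduct,
        Fin.sum_univ_two, Amap,
        Quaternion.re_add, Quaternion.imI_add, Quaternion.imJ_add, Quaternion.imK_add,
        Quaternion.re_star, Quaternion.imI_star, Quaternion.imJ_star, Quaternion.imK_star,
        Matrix.cons_val_zero, Matrix.cons_val_one, Matrix.head_cons, Matrix.cons_val',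
        Matrix.of_apply, Matrix.empty_val', Matrix.cons_val_fin_one, Matrix.head_fin_const,
        hSα, hAA]
      push_cast
      ring
    · simp only [Fin.mk_one, Matrix.cons_val_one, Matrix.head_cons, Matrix.vecMul,
        dotProduct, Fin.sum_univ_two, Amap,
        Quaternion.re_add, Quaternion.imI_add, Quaternion.imJ_add, Quaternion.imK_add,
        Quaternion.re_star, Quaternion.imI_star, Quaternion.imJ_star, Quaternion.imK_star,
        Matrix.cons_val_zero, Matrix.cons_val_one, Matrix.head_cons, Matrix.cons_val',
        Matrix.of_apply, Matrix.empty_val', Matrix.cons_val_fin_one, Matrix.head_fin_const,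
        hSβ, hBB]
      push_cast
      ring
  have hexp : ∀ a : Fin 4 → ℝ,
      Complex.exp (2 * (Real.pi : ℂ) * Complex.I * ((qtr (star (quatOf a) * x₂) : ℝ) : ℂ))
          * Complex.exp (-(2 * (Real.pi : ℂ)) * (((qN x₁ + qN (quatOf a)) : ℝ) : ℂ))
        = Complex.exp (-(2 * (Real.pi : ℂ)) * ((qN x₁ : ℝ) : ℂ)) * gauss cc a := by
    intro a
    rw [gauss, ← Complex.exp_add, ← Complex.exp_add]
    congr 1
    simp only [qtr, Quaternion.re_mul, Quaternion.re_star, Quaternion.imI_star, Quaternion.imJ_star, Quaternion.imK_star]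
    simp only [qtr, qN, quatOf, lin, Fin.sum_univ_four, Quaternion.re_mul,
      Quaternion.re_star, Quaternion.imI_star, Quaternion.imJ_star, Quaternion.imK_star,
      hcc, Matrix.cons_val_zero, Matrix.cons_val_one, Matrix.head_cons, Matrix.cons_val_two,
      Matrix.tail_cons, Matrix.cons_val_three]
    push_cast
    ring
  have hπ4 : (4*(π:ℂ)) ≠ 0 := by simpa using hπ
  set K : ℂ := Complex.exp (-(2 * (π : ℂ)) * ((qN x₁ : ℝ) : ℂ)) with hK
  have hint_eq : ∀ a : Fin 4 → ℝ,
      Complex.exp (2 * (Real.pi : ℂ) * Complex.I * ((qtr (star (quatOf a) * x₂) : ℝ) : ℂ))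
          * Complex.exp (-(2 * (Real.pi : ℂ)) * (((qN x₁ + qN (quatOf a)) : ℝ) : ℂ))
          * MvPolynomial.eval
              (Matrix.vecMul ![X₀, Y₀]
                (Amap (star x₁) - Complex.I • Amap (star (quatOf a)))) P
        = K * ∑ d ∈ P.support, MvPolynomial.coeff d P
            * F cc αα ββ AA BB (d 0) (d 1) a := by
    intro a
    rw [hvec a, hexp a, MvPolynomial.eval_eq']
    simp only [Fin.prod_univ_two, Matrix.cons_val_zero, Matrix.cons_val_one, Matrix.head_cons]
    rw [Finset.mul_sum, Finset.mul_sum]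
    refine Finset.sum_congr rfl fun d _ => ?_
    simp only [F]
    ring
  have hsum2 : ∑ ℓ, cc ℓ ^ 2 = -(16*(π:ℂ)^2) * ((qN x₂ : ℝ) : ℂ) := by
    simp only [hcc, Fin.sum_univ_four, Matrix.cons_val_zero, Matrix.cons_val_one,
      Matrix.head_cons, Matrix.cons_val_two, Matrix.tail_cons, Matrix.cons_val_three, qN]
    push_cast
    linear_combination (16*(π:ℂ)^2*(((x₂.re:ℝ):ℂ)^2 + ((x₂.imI:ℝ):ℂ)^2
      + ((x₂.imJ:ℝ):ℂ)^2 + ((x₂.imK:ℝ):ℂ)^2)) * Complex.I_sq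
  have hKE : K * Complex.exp ((∑ ℓ, cc ℓ ^ 2) / (8 * (π:ℂ)))
      = Complex.exp (-(2 * (π : ℂ)) * (((qN x₁ + qN x₂) : ℝ) : ℂ)) := by
    rw [hK, ← Complex.exp_add, hsum2]
    congr 1
    push_cast
    field_simp
    ring
  rw [integral_smul_measure]
  rw [integral_congr_ae (Eventually.of_forall hint_eq)]
  rw [MeasureTheory.integral_const_mul,
    integral_finset_sum _ fun d _ =>
      (integrable_F cc αα ββ AA BB (d 0) (d 1)).const_mul (MvPolynomial.coeff d P)]
  have hMval : ∀ d ∈ P.support,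
      (∫ a : Fin 4 → ℝ, MvPolynomial.coeff d P * F cc αα ββ AA BB (d 0) (d 1) a)
      = (MvPolynomial.coeff d P
          * ((AA + (∑ ℓ, αα ℓ * cc ℓ) / (4 * (π:ℂ))) ^ (d 0)
            * (BB + (∑ ℓ, ββ ℓ * cc ℓ) / (4 * (π:ℂ))) ^ (d 1)))
          * ((1/4 : ℂ) * Complex.exp ((∑ ℓ, cc ℓ ^ 2) / (8 * (π:ℂ)))) := by
    intro d _
    rw [MeasureTheory.integral_const_mul, M_val cc αα ββ AA BB hα hβ hαβ (d 0) (d 1),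
      integral_gauss cc]
    ring
  rw [Finset.sum_congr rfl hMval, ← Finset.sum_mul, hvec2, MvPolynomial.eval_eq']
  simp only [Fin.prod_univ_two, Matrix.cons_val_zero, Matrix.cons_val_one, Matrix.head_cons]
  rw [← hKE, show ((4:ℝ≥0∞)).toReal = (4:ℝ) by simp, Complex.real_smul]
  push_cast
  ring
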